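/- Every element x of W3 satisfies x ≥ a + b. -/
import Mathlib


/-- `w a b δ n = n + a⌊n/a⌋ + b⌊n/δ⌋`. -/
def w (a b δ n : ℕ) : ℕ := n + a * (n / a) + b * (n / δ)

/-- `W0` is the image of `w`. -/
def W0 (a b δ : ℕ) : Set ℕ := Set.range (w a b δ)

/-- `W3 = {x : x + δ ∈ W0 and x ∉ W0}`. -/
def W3 (a b δ : ℕ) : Set ℕ := {x | x + δ ∈ W0 a b δ ∧ x ∉ W0 a b δ}

/-- Every element `x` of `W3` satisfies `x ≥ a + b`. -/
theorem stmt_5 (a δ : ℕ) (ha : 0 < a) (hlt : a < δ) (hlt2 : δ < 2 * a)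
    (hgcd : Nat.gcd a δ = 1) (b : ℕ) (hb : b = a + δ) :
    ∀ x ∈ W3 a b δ, a + b ≤ x := by
  rintro x ⟨⟨n, hn⟩, hx⟩
  by_contra h
  push_neg at h
  unfold w at hn
  -- first show n < δ
  have hnδ : n < δ := by
    by_contra hnd
    push_neg at hnd
    have h1 : 1 ≤ n / a := (Nat.one_le_div_iff ha).2 (le_trans hlt.le hnd)
    have h2 : 1 ≤ n / δ := (Nat.one_le_div_iff (lt_trans ha hlt)).2 hnd
    nlinarith [Nat.le_mul_of_pos_right a h1, Nat.le_mul_of_pos_right b h2]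
  have hd0 : n / δ = 0 := Nat.div_eq_of_lt hnδ
  rw [hd0] at hn
  rcases lt_or_ge n a with hna | hna
  · rw [Nat.div_eq_of_lt hna] at hn
    omega
  · have hna2 : n / a = 1 := by
      rw [Nat.div_eq_of_lt_le] <;> omega
    rw [hna2] at hn
    -- x = n + a - δ < a
    have hxa : x < a := by omega
    exact hx ⟨x, by unfold w; rw [Nat.div_eq_of_lt hxa, Nat.div_eq_of_lt (lt_trans hxa hlt)]; ring⟩
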